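/- Define the Legendre functions L_a : ℝ → ℝ by the Rodrigues formula L_a(x) = (1/(2^a · a!)) · D^a[(t² − 1)^a](x), where D^a denotes the a-th iterated derivative. Then for every natural number a ≥ 1 and every x ∈ ℝ, the three-term recurrence holds: (a+1) · L_{a+1}(x) = (2a+1) · x · L_a(x) − a · L_{a−1}(x). -/

import Mathlib

/-- The Legendre function given by Rodrigues' formula. -/
noncomputable def legendre (a : ℕ) (x : ℝ) : ℝ :=
  (1 / (2 ^ a * (Nat.factorial a : ℝ))) *
    iteratedDeriv a (fun t : ℝ => (t ^ 2 - 1) ^ a) x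

open Polynomial

open Polynomial

private noncomputable def uu (a : ℕ) : ℝ[X] := ((X : ℝ[X]) ^ 2 - 1) ^ a

lemma leib1 (n : ℕ) (f : ℝ[X]) :
    derivative^[n] (X * f)
      = X * derivative^[n] f + (n : ℝ[X]) * derivative^[n - 1] f := by
  induction n generalizing f with
  | zero => simp
  | succ n ih =>
      rw [Function.iterate_succ_apply]
      have h : derivative ((X : ℝ[X]) * f) = X * derivative f + f := by
        simp [derivative_mul]; ring
      rw [h, iterate_map_add derivative n _ _, ih (derivative f)]
      have h2 : (n : ℝ[X]) * derivative^[n - 1] (derivative f)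
          = (n : ℝ[X]) * derivative^[n] f := by
        cases n with
        | zero => simp
        | succ k => rw [Nat.add_sub_cancel, ← Function.iterate_succ_apply]
      rw [h2, ← Function.iterate_succ_apply, Nat.add_sub_cancel]
      push_cast
      ring

lemma leib2 (n : ℕ) (f : ℝ[X]) :
    derivative^[n] (((X : ℝ[X]) ^ 2 - 1) * f)
      = ((X : ℝ[X]) ^ 2 - 1) * derivative^[n] f
        + ((2 * n : ℕ) : ℝ[X]) * X * derivative^[n - 1] f
        + ((n * (n - 1) : ℕ) : ℝ[X]) * derivative^[n - 2] f := by
  have key : ((X : ℝ[X]) ^ 2 - 1) * f = X * (X * f) - f := by ring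
  rw [key, iterate_derivative_sub, leib1 n (X * f), leib1 n f, leib1 (n - 1) f]
  cases n with
  | zero => simp; ring
  | succ k =>
      cases k with
      | zero => simp; ring
      | succ m =>
          have e1 : m + 1 + 1 - 1 = m + 1 := rfl
          have e2 : m + 1 + 1 - 2 = m := rfl
          have e3 : m + 1 - 1 = m := rfl
          rw [e1, e2, e3]
          push_cast
          ring

lemma deriv_uu (a : ℕ) :
    derivative (uu (a + 1)) = ((2 * a + 2 : ℕ) : ℝ[X]) * (X * uu a) := by
  unfold uu
  rw [derivative_pow_succ]
  have : derivative ((X : ℝ[X]) ^ 2 - 1) = 2 * X := by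
    simp [derivative_sub, derivative_pow, map_ofNat]
  rw [this]
  simp only [map_add, map_one, map_natCast]
  push_cast
  ring


lemma uu_succ (a : ℕ) : uu (a + 1) = ((X : ℝ[X]) ^ 2 - 1) * uu a := by
  unfold uu; ring

/-- base identity: (X²-1) * (uu (c+1))' = (2c+2) • X * uu (c+1) -/
lemma base_id (c : ℕ) :
    ((X : ℝ[X]) ^ 2 - 1) * derivative (uu (c + 1))
      = ((2 * c + 2 : ℕ) : ℝ[X]) * (X * uu (c + 1)) := by
  rw [deriv_uu, uu_succ]; ring

lemma J (c : ℕ) :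
    ((X : ℝ[X]) ^ 2 - 1) * derivative^[c + 1] (uu (c + 1))
      = 2 * X * derivative^[c] (uu (c + 1))
        + ((c * (c + 3) : ℕ) : ℝ[X]) * derivative^[c - 1] (uu (c + 1)) := by
  have E := congrArg (fun p => derivative^[c] p) (base_id c)
  rw [leib2 c (derivative (uu (c + 1))), iterate_derivative_natCast_mul,
    leib1 c (uu (c + 1))] at E
  rw [← Function.iterate_succ_apply derivative c (uu (c+1))] at E
  match c with
  | 0 =>
      simp only [Nat.zero_eq, Function.iterate_zero, id] at E ⊢
      push_cast at E ⊢
      linear_combination E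
  | 1 =>
      simp only [Nat.sub_self, Nat.reduceSub, Function.iterate_one,
        Function.iterate_zero, id] at E ⊢
      push_cast at E ⊢
      linear_combination E
  | (k+2) =>
      simp only [Nat.succ_eq_add_one] at E
      have e1 : k + 2 - 1 = k + 1 := rfl
      have e2 : k + 2 - 2 = k := rfl
      rw [e1, e2] at E
      rw [e1]
      rw [show derivative^[k+1] (derivative (uu (k+2+1)))
            = derivative^[k+2] (uu (k+2+1)) from
          (Function.iterate_succ_apply derivative (k+1) _).symm,
        show derivative^[k] (derivative (uu (k+2+1)))
            = derivative^[k+1] (uu (k+2+1)) from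
          (Function.iterate_succ_apply derivative k _).symm] at E
      push_cast at E ⊢
      linear_combination E

lemma E1 (d : ℕ) :
    derivative^[d + 2] (uu (d + 2))
      = ((2 * d + 4 : ℕ) : ℝ[X]) * (X * derivative^[d + 1] (uu (d + 1))
          + ((d + 1 : ℕ) : ℝ[X]) * derivative^[d] (uu (d + 1))) := by
  have h : derivative^[d + 2] (uu (d + 2))
      = derivative^[d + 1] (derivative (uu (d + 2))) :=
    Function.iterate_succ_apply derivative (d + 1) _
  rw [h, deriv_uu (d + 1), iterate_derivative_natCast_mul, leib1 (d + 1),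
    Nat.add_sub_cancel]
  push_cast
  ring

lemma Q (c : ℕ) :
    X * derivative^[c + 1] (uu (c + 1))
      = ((c + 2 : ℕ) : ℝ[X]) * derivative^[c] (uu (c + 1))
        + ((2 * c + 2 : ℕ) : ℝ[X]) * derivative^[c] (uu c) := by
  match c with
  | 0 =>
      simp only [zero_add, Function.iterate_one, Function.iterate_zero, id,
        Nat.cast_ofNat, Nat.zero_add, mul_zero, zero_mul]
      have h : derivative (uu 1) = 2 * X := by
        simp [uu, derivative_sub, derivative_X_pow, map_ofNat, one_add_one_eq_two]
      rw [h]
      unfold uu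
      ring
  | (d+1) =>
      have e1 := E1 d
      have E2 : derivative^[d + 1] (uu (d + 2))
          = ((2 * d + 4 : ℕ) : ℝ[X]) * (X * derivative^[d] (uu (d + 1))
              + ((d : ℕ) : ℝ[X]) * derivative^[d - 1] (uu (d + 1))) := by
        have h : derivative^[d + 1] (uu (d + 2))
            = derivative^[d] (derivative (uu (d + 2))) :=
          Function.iterate_succ_apply derivative d _
        rw [h, deriv_uu (d + 1), iterate_derivative_natCast_mul, leib1 d]
        push_cast
        ring
      have Jd := J d
      push_cast at e1 E2 Jd ⊢
      linear_combination (X : ℝ[X]) * e1 - ((d : ℝ[X]) + 3) * E2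
        + (2 * (d : ℝ[X]) + 4) * Jd

lemma M (b : ℕ) :
    derivative^[b + 2] (uu (b + 2))
      = ((4 * b + 6 : ℕ) : ℝ[X]) * X * derivative^[b + 1] (uu (b + 1))
        - ((4 * (b + 1) ^ 2 : ℕ) : ℝ[X]) * derivative^[b] (uu b) := by
  have e1 := E1 b
  have q := Q b
  push_cast at e1 q ⊢
  linear_combination e1 - (2 * (b : ℝ[X]) + 2) * q

lemma iterDeriv_poly (n : ℕ) (p : ℝ[X]) :
    iteratedDeriv n (fun t : ℝ => p.eval t) = fun x => (derivative^[n] p).eval x := by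
  induction n generalizing p with
  | zero => simp
  | succ n ih =>
      rw [iteratedDeriv_succ']
      have h : (deriv fun t : ℝ => p.eval t) = fun t : ℝ => (derivative p).eval t :=
        funext fun y => p.deriv
      rw [h, ih (derivative p)]
      funext y
      rw [Function.iterate_succ_apply]

lemma legendre_eq (n : ℕ) (x : ℝ) :
    legendre n x = (1 / (2 ^ n * (Nat.factorial n : ℝ)))
      * (derivative^[n] (uu n)).eval x := by
  unfold legendre
  congr 1
  have h : (fun t : ℝ => (t ^ 2 - 1) ^ n) = fun t : ℝ => (uu n).eval t := by
    funext t; simp [uu]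
  rw [h, iterDeriv_poly]

/-- The three-term recurrence for Legendre polynomials. -/
theorem legendre_recurrence (a : ℕ) (ha : 1 ≤ a) (x : ℝ) :
    ((a : ℝ) + 1) * legendre (a + 1) x
      = (2 * (a : ℝ) + 1) * x * legendre a x - (a : ℝ) * legendre (a - 1) x := by
  obtain ⟨b, rfl⟩ : ∃ b, a = b + 1 := ⟨a - 1, (Nat.succ_pred_eq_of_pos ha).symm⟩
  have hsub : b + 1 - 1 = b := rfl
  rw [hsub, legendre_eq (b + 1 + 1), legendre_eq (b + 1), legendre_eq b]
  have em := congrArg (fun p : ℝ[X] => p.eval x) (M b)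
  simp only [eval_mul, eval_sub, eval_X, eval_natCast] at em
  rw [show b + 1 + 1 = b + 2 from rfl] at *
  rw [em]
  have h0 : (Nat.factorial b : ℝ) ≠ 0 :=
    ne_of_gt (by exact_mod_cast Nat.factorial_pos b)
  have h1 : ((2 : ℝ)) ≠ 0 := two_ne_zero
  rw [Nat.factorial_succ (b + 1), Nat.factorial_succ b]
  push_cast
  field_simp
  ring
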